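/- Let q̂ be the position operator on L²(ℝ), (q̂ψ)(t) = tψ(t), with domain {ψ ∈ L²(ℝ) : ∫ t²|ψ(t)|² dt < ∞}. Then q̂ is selfadjoint. -/

import Mathlib

open MeasureTheory Set ComplexConjugate

noncomputable section

local notation "H" => Lp ℂ 2 (volume : Measure ℝ)

lemma pos_inner_eq (f g : H) : (inner ℂ f g : ℂ) = ∫ t, conj (f t) * g t := by
  rw [MeasureTheory.L2.inner_def]
  simp [RCLike.inner_apply, mul_comm]

lemma pos_dense (T : H →ₗ.[ℂ] H)
    (hdom : ∀ f : H, f ∈ T.domain ↔ MemLp (fun t : ℝ => (t : ℂ) * f t) 2 volume) :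
    Dense (T.domain : Set H) := by
  intro f
  rw [Metric.mem_closure_iff]
  intro ε hε
  obtain ⟨g, hg_supp, hfg, hg_cont, hg_mem⟩ :=
    (Lp.memLp f).exists_hasCompactSupport_eLpNorm_sub_le (p := 2) (by norm_num)
      (ε := ENNReal.ofReal (ε / 2)) (by simp [hε])
  refine ⟨hg_mem.toLp g, ?_, ?_⟩
  · rw [SetLike.mem_coe, hdom]
    have hty : Continuous fun t : ℝ => (t : ℂ) * g t :=
      Complex.continuous_ofReal.mul hg_cont
    have hts : HasCompactSupport fun t : ℝ => (t : ℂ) * g t := hg_supp.mul_left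
    refine (hty.memLp_of_hasCompactSupport hts).ae_eq ?_
    filter_upwards [hg_mem.coeFn_toLp] with t ht
    rw [ht]
  · rw [dist_eq_norm, Lp.norm_def]
    have : eLpNorm (⇑(f - hg_mem.toLp g)) 2 volume = eLpNorm (⇑f - g) 2 volume := by
      refine eLpNorm_congr_ae ?_
      filter_upwards [Lp.coeFn_sub f (hg_mem.toLp g), hg_mem.coeFn_toLp] with t h1 h2
      simp only [h1, Pi.sub_apply, h2]
    rw [this]
    calc (eLpNorm (⇑f - g) 2 volume).toReal ≤ (ENNReal.ofReal (ε/2)).toReal :=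
          ENNReal.toReal_mono ENNReal.ofReal_ne_top hfg
      _ < ε := by rw [ENNReal.toReal_ofReal (by linarith)]; linarith


lemma pos_key (T : H →ₗ.[ℂ] H)
    (hdom : ∀ f : H, f ∈ T.domain ↔ MemLp (fun t : ℝ => (t : ℂ) * f t) 2 volume)
    (hact : ∀ f : T.domain,
      (T f : ℝ → ℂ) =ᵐ[volume] fun t : ℝ => (t : ℂ) * (f : H) t)
    (y w : H)
    (hw : ∀ x : T.domain, (inner ℂ w ((x : H)) : ℂ) = inner ℂ y (T x)) :
    (fun t : ℝ => (t : ℂ) * y t) =ᵐ[volume] ⇑w := by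
  have hyM : AEStronglyMeasurable (fun t : ℝ => (t : ℂ) * y t) volume :=
    (Complex.continuous_ofReal.aestronglyMeasurable).mul (Lp.aestronglyMeasurable y)
  have key : ∀ n : ℕ, ∀ᵐ t : ℝ, t ∈ Icc (-(n : ℝ)) n → (t : ℂ) * y t = w t := by
    intro n
    set s : Set ℝ := Icc (-(n : ℝ)) n with hs
    set u : ℝ → ℂ := s.indicator (fun t => (t : ℂ) * y t - w t) with hudef
    have huM : AEStronglyMeasurable u volume :=
      (hyM.sub (Lp.aestronglyMeasurable w)).indicator measurableSet_Icc
    have hbound : ∀ t : ℝ, t ∈ s → ‖(t : ℂ)‖ ≤ (n : ℝ) := by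
      intro t ht
      rw [Complex.norm_real, Real.norm_eq_abs, abs_le]
      exact ⟨ht.1, ht.2⟩
    -- u ∈ L²
    have hu1 : MemLp (s.indicator fun t => (t : ℂ) * y t) 2 volume := by
      refine MemLp.mono ((Lp.memLp y).const_mul (n : ℂ)) (hyM.indicator measurableSet_Icc) ?_
      refine Filter.Eventually.of_forall fun t => ?_
      by_cases ht : t ∈ s
      · rw [indicator_of_mem ht]
        simp only [norm_mul, Complex.norm_natCast]
        exact mul_le_mul_of_nonneg_right (hbound t ht) (norm_nonneg _)
      · rw [indicator_of_notMem ht]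
        simpa using norm_nonneg ((n : ℂ) * y t)
    have hu : MemLp u 2 volume := by
      have h : u = fun t => (s.indicator fun t => (t : ℂ) * y t) t - s.indicator (⇑w) t := by
        funext t
        by_cases ht : t ∈ s <;> simp [hudef, indicator, ht]
      rw [h]
      exact hu1.sub ((Lp.memLp w).indicator measurableSet_Icc)
    -- t * u ∈ L²
    have htuM : AEStronglyMeasurable (fun t : ℝ => (t : ℂ) * u t) volume :=
      (Complex.continuous_ofReal.aestronglyMeasurable).mul huM
    have htu : MemLp (fun t : ℝ => (t : ℂ) * u t) 2 volume := by
      refine MemLp.mono (hu.const_mul (n : ℂ)) htuM ?_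
      refine Filter.Eventually.of_forall fun t => ?_
      by_cases ht : t ∈ s
      · simp only [norm_mul, Complex.norm_natCast]
        exact mul_le_mul_of_nonneg_right (hbound t ht) (norm_nonneg _)
      · have h0 : u t = 0 := indicator_of_notMem ht _
        simp [h0]
    -- the Lp element x
    set x : H := hu.toLp u with hxdef
    have hxu : ⇑x =ᵐ[volume] u := hu.coeFn_toLp
    have htx : MemLp (fun t : ℝ => (t : ℂ) * x t) 2 volume := by
      refine htu.ae_eq ?_
      filter_upwards [hxu] with t ht
      rw [ht]
    have hxmem : x ∈ T.domain := (hdom x).mpr htx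
    have hTx : (T ⟨x, hxmem⟩ : ℝ → ℂ) =ᵐ[volume] fun t : ℝ => (t : ℂ) * u t := by
      filter_upwards [hact ⟨x, hxmem⟩, hxu] with t h1 h2
      rw [h1]; simp [h2]
    -- the two integrals
    have hIl : Integrable (fun t : ℝ => conj (w t) * u t) volume := by
      refine (MeasureTheory.L2.integrable_inner (𝕜 := ℂ) w x).congr ?_
      filter_upwards [hxu] with t ht
      simp [RCLike.inner_apply, ht]; ring
    have hIr : Integrable (fun t : ℝ => conj (y t) * ((t : ℂ) * u t)) volume := by
      refine (MeasureTheory.L2.integrable_inner (𝕜 := ℂ) y (T ⟨x, hxmem⟩)).congr ?_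
      filter_upwards [hTx] with t ht
      simp [RCLike.inner_apply, ht]; ring
    have heq : (∫ t, conj (w t) * u t) = ∫ t, conj (y t) * ((t : ℂ) * u t) := by
      have h1 := hw ⟨x, hxmem⟩
      rw [pos_inner_eq, pos_inner_eq] at h1
      have h2 : ((⟨x, hxmem⟩ : T.domain) : H) = x := rfl
      rw [h2] at h1
      calc (∫ t, conj (w t) * u t)
          = ∫ t, conj (w t) * x t := by
            refine integral_congr_ae ?_
            filter_upwards [hxu] with t ht
            rw [ht]
        _ = ∫ t, conj (y t) * (T ⟨x, hxmem⟩ : ℝ → ℂ) t := h1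
        _ = ∫ t, conj (y t) * ((t : ℂ) * u t) := by
            refine integral_congr_ae ?_
            filter_upwards [hTx] with t ht
            rw [ht]
    -- ⟪x,x⟫ = 0, hence u = 0 a.e.
    have hptwise : ∀ t : ℝ, conj (u t) * u t =
        conj (y t) * ((t : ℂ) * u t) - conj (w t) * u t := by
      intro t
      by_cases ht : t ∈ s
      · have hut : u t = (t : ℂ) * y t - w t := indicator_of_mem ht _
        rw [hut]
        simp only [map_sub, map_mul, Complex.conj_ofReal]
        ring
      · have hut : u t = 0 := indicator_of_notMem ht _
        simp [hut]
    have hxx : (inner ℂ x x : ℂ) = 0 := by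
      rw [pos_inner_eq]
      calc (∫ t, conj (x t) * x t)
          = ∫ t, conj (u t) * u t := by
            refine integral_congr_ae ?_
            filter_upwards [hxu] with t ht
            rw [ht]
        _ = ∫ t, (conj (y t) * ((t : ℂ) * u t) - conj (w t) * u t) :=
            integral_congr_ae (Filter.Eventually.of_forall hptwise)
        _ = (∫ t, conj (y t) * ((t : ℂ) * u t)) - ∫ t, conj (w t) * u t :=
            integral_sub hIr hIl
        _ = 0 := by rw [heq]; ring
    have hx0 : x = 0 := inner_self_eq_zero.mp hxx
    have hu0 : u =ᵐ[volume] 0 := by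
      refine hxu.symm.trans ?_
      rw [hx0]
      exact Lp.coeFn_zero ℂ 2 volume
    filter_upwards [hu0] with t ht hts
    have : u t = (t : ℂ) * y t - w t := indicator_of_mem hts _
    rw [ht] at this
    simp only [Pi.zero_apply] at this
    linear_combination -this
  have hall : ∀ᵐ t : ℝ, ∀ n : ℕ, t ∈ Icc (-(n : ℝ)) n → (t : ℂ) * y t = w t :=
    ae_all_iff.mpr key
  filter_upwards [hall] with t ht
  have habs : |t| ≤ (⌈|t|⌉₊ : ℝ) := Nat.le_ceil _
  obtain ⟨h1, h2⟩ := abs_le.mp habs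
  exact ht ⌈|t|⌉₊ ⟨h1, h2⟩

/-- **The position operator is selfadjoint.**
`T` is the multiplication operator by the identity function on `L²(ℝ)`, i.e.
its domain is `{ψ ∈ L² : ∫ t²|ψ(t)|² dt < ∞}` (expressed as `t·ψ(t) ∈ L²`)
and `(Tψ)(t) = t ψ(t)` almost everywhere.  Then `T` is selfadjoint. -/
theorem position_operator_isSelfAdjoint
    (T : Lp ℂ 2 (volume : Measure ℝ) →ₗ.[ℂ] Lp ℂ 2 (volume : Measure ℝ))
    (hdom : ∀ f : Lp ℂ 2 (volume : Measure ℝ),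
      f ∈ T.domain ↔ MemLp (fun t : ℝ => (t : ℂ) * f t) 2 volume)
    (hact : ∀ f : T.domain,
      (T f : ℝ → ℂ) =ᵐ[volume]
        fun t : ℝ => (t : ℂ) * (f : Lp ℂ 2 (volume : Measure ℝ)) t) :
    IsSelfAdjoint T := by
  have hsymm : T.IsFormalAdjoint T := by
    intro x y
    rw [pos_inner_eq, pos_inner_eq]
    refine integral_congr_ae ?_
    filter_upwards [hact x, hact y] with t h1 h2
    rw [h1, h2]
    simp only [map_mul, Complex.conj_ofReal]
    ring
  have hdense : Dense (T.domain : Set (Lp ℂ 2 (volume : Measure ℝ))) :=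
    pos_dense T hdom
  rw [LinearPMap.isSelfAdjoint_def]
  have hadj := LinearPMap.adjoint_isFormalAdjoint hdense
  -- key : for every y in the adjoint domain, (T† y) = t·y a.e.
  have key : ∀ y : T.adjoint.domain,
      (fun t : ℝ => (t : ℂ) * (y : Lp ℂ 2 (volume : Measure ℝ)) t) =ᵐ[volume]
        ⇑(T.adjoint y) := fun y =>
    pos_key T hdom hact (y : Lp ℂ 2 (volume : Measure ℝ)) (T.adjoint y)
      (fun x => hadj y x)
  refine le_antisymm ?_ (hsymm.le_adjoint hdense)
  rw [show (T.adjoint ≤ T) = (T.adjoint.domain ≤ T.domain ∧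
      ∀ ⦃x : T.adjoint.domain⦄ ⦃y : T.domain⦄ (_h : (x : Lp ℂ 2 (volume : Measure ℝ)) = y),
        T.adjoint x = T y) from rfl]
  refine ⟨?_, ?_⟩
  · intro z hz
    exact (hdom z).mpr ((Lp.memLp (T.adjoint ⟨z, hz⟩)).ae_eq (key ⟨z, hz⟩).symm)
  · intro a b hab
    refine Lp.ext ?_
    filter_upwards [(key a).symm, hact b] with t h1 h2
    rw [h1, h2, hab]
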